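/- Let ω > 0 and let V : ℝ² → ℝ be given by V(x,y) = (ω²/2)(x² + y²) + W(x,y), where W is continuously differentiable and satisfies x·∂W/∂x + y·∂W/∂y = -2W. Let (x,y) be a solution of x'' = -∂V/∂x ∘ (x,y), y'' = -∂V/∂y ∘ (x,y), and let E = (1/2)(x'² + y'²) + V(x,y). Then the quantity I(t) = -(1/ω)cos(2ωt)·E - sin(2ωt)·(x x' + y y') + ω cos(2ωt)·(x² + y²) is constant in t. -/

import Mathlib

theorem stmt_5 (ω : ℝ) (hω : 0 < ω) (W : ℝ × ℝ → ℝ) (hW : ContDiff ℝ 1 W)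
    (hhom : ∀ p : ℝ × ℝ,
      p.1 * fderiv ℝ W p (1, 0) + p.2 * fderiv ℝ W p (0, 1) = -2 * W p)
    (V : ℝ × ℝ → ℝ)
    (hV : ∀ p : ℝ × ℝ, V p = (ω^2 / 2) * (p.1^2 + p.2^2) + W p)
    (x y : ℝ → ℝ)
    (hx : Differentiable ℝ x) (hx' : Differentiable ℝ (deriv x))
    (hy : Differentiable ℝ y) (hy' : Differentiable ℝ (deriv y))
    (hxeq : ∀ t, deriv (deriv x) t = -(fderiv ℝ V (x t, y t) (1, 0)))
    (hyeq : ∀ t, deriv (deriv y) t = -(fderiv ℝ V (x t, y t) (0, 1)))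
    (E : ℝ)
    (hE : ∀ t, E = (1/2) * ((deriv x t)^2 + (deriv y t)^2) + V (x t, y t)) :
    ∀ t s : ℝ,
      -(1/ω) * Real.cos (2*ω*t) * E - Real.sin (2*ω*t) * (x t * deriv x t + y t * deriv y t)
        + ω * Real.cos (2*ω*t) * ((x t)^2 + (y t)^2) =
      -(1/ω) * Real.cos (2*ω*s) * E - Real.sin (2*ω*s) * (x s * deriv x s + y s * deriv y s)
        + ω * Real.cos (2*ω*s) * ((x s)^2 + (y s)^2) := by
  have hWd : Differentiable ℝ W := hW.differentiable one_ne_zero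
  have hVdef : V = fun p : ℝ × ℝ => (ω^2 / 2) * (p.1^2 + p.2^2) + W p := funext hV
  -- fderiv of V
  have hVfd : ∀ p : ℝ × ℝ, HasFDerivAt V
      ((ω^2/2) • ((p.1 • ContinuousLinearMap.fst ℝ ℝ ℝ + p.1 • ContinuousLinearMap.fst ℝ ℝ ℝ)
          + (p.2 • ContinuousLinearMap.snd ℝ ℝ ℝ + p.2 • ContinuousLinearMap.snd ℝ ℝ ℝ))
        + fderiv ℝ W p) p := by
    intro p
    rw [hVdef]
    have h1 : HasFDerivAt (fun q : ℝ × ℝ => q.1 ^ 2)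
        (p.1 • ContinuousLinearMap.fst ℝ ℝ ℝ + p.1 • ContinuousLinearMap.fst ℝ ℝ ℝ) p := by
      simp only [pow_two]
      exact hasFDerivAt_fst.mul hasFDerivAt_fst
    have h2 : HasFDerivAt (fun q : ℝ × ℝ => q.2 ^ 2)
        (p.2 • ContinuousLinearMap.snd ℝ ℝ ℝ + p.2 • ContinuousLinearMap.snd ℝ ℝ ℝ) p := by
      simp only [pow_two]
      exact hasFDerivAt_snd.mul hasFDerivAt_snd
    exact (((h1.add h2).const_mul (ω^2/2)).add (hWd p).hasFDerivAt)
  have hVx : ∀ p : ℝ × ℝ, fderiv ℝ V p (1, 0) = ω^2 * p.1 + fderiv ℝ W p (1, 0) := by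
    intro p
    rw [(hVfd p).fderiv]
    simp
    ring
  have hVy : ∀ p : ℝ × ℝ, fderiv ℝ V p (0, 1) = ω^2 * p.2 + fderiv ℝ W p (0, 1) := by
    intro p
    rw [(hVfd p).fderiv]
    simp
    ring
  have hxeq' : ∀ t, deriv (deriv x) t
      = -(ω^2 * x t + fderiv ℝ W (x t, y t) (1, 0)) := fun t => by rw [hxeq t, hVx]
  have hyeq' : ∀ t, deriv (deriv y) t
      = -(ω^2 * y t + fderiv ℝ W (x t, y t) (0, 1)) := fun t => by rw [hyeq t, hVy]
  intro t s
  set f : ℝ → ℝ := fun t =>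
    -(1/ω) * Real.cos (2*ω*t) * E - Real.sin (2*ω*t) * (x t * deriv x t + y t * deriv y t)
      + ω * Real.cos (2*ω*t) * ((x t)^2 + (y t)^2) with hf
  have hD : ∀ u : ℝ, HasDerivAt f 0 u := by
    intro u
    have h0 : HasDerivAt (fun t : ℝ => 2*ω*t) (2*ω) u := by
      simpa using (hasDerivAt_id u).const_mul (2*ω)
    have hcos := h0.cos
    have hsin := h0.sin
    have hx1 : HasDerivAt x (deriv x u) u := (hx u).hasDerivAt
    have hx2 : HasDerivAt (deriv x) (deriv (deriv x) u) u := (hx' u).hasDerivAt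
    have hy1 : HasDerivAt y (deriv y u) u := (hy u).hasDerivAt
    have hy2 : HasDerivAt (deriv y) (deriv (deriv y) u) u := (hy' u).hasDerivAt
    have H := (((hcos.const_mul (-(1/ω))).mul_const E).sub
        (hsin.mul ((hx1.mul hx2).add (hy1.mul hy2)))).add
        ((hcos.const_mul ω).mul ((hx1.pow 2).add (hy1.pow 2)))
    convert H using 1
    all_goals try rfl
    rw [hxeq' u, hyeq' u, hE u, hV (x u, y u)]
    have hh := hhom (x u, y u)
    simp only [Pi.add_apply, Pi.mul_apply, Pi.pow_apply, Nat.cast_ofNat] at hh ⊢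
    field_simp
    linear_combination (-Real.sin (ω*2*u)) * hh
  have hdiff : Differentiable ℝ f := fun u => (hD u).differentiableAt
  have := is_const_of_deriv_eq_zero hdiff (fun u => (hD u).deriv) t s
  exact this
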